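/- The commutator subgroup [G,G] of G equals {E₄, −E₄}, where E₄ is the 4×4 identity matrix; in particular [G,G] has order two. -/

import Mathlib

open Matrix Complex

noncomputable def g1 : Matrix (Fin 4) (Fin 4) ℂ :=
  !![1, 0, 0, 0; 0, -1, 0, 0; 0, 0, 1, 0; 0, 0, 0, -1]

noncomputable def g2 : Matrix (Fin 4) (Fin 4) ℂ :=
  !![0, I, 0, 0; -I, 0, 0, 0; 0, 0, 0, -I; 0, 0, I, 0]

noncomputable def g3 : Matrix (Fin 4) (Fin 4) ℂ :=
  !![0, 1, 0, 0; 1, 0, 0, 0; 0, 0, 0, 1; 0, 0, 1, 0]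

noncomputable def g4 : Matrix (Fin 4) (Fin 4) ℂ :=
  !![0, 0, 0, 1; 0, 0, -1, 0; 0, -1, 0, 0; 1, 0, 0, 0]

noncomputable def g5 : Matrix (Fin 4) (Fin 4) ℂ :=
  !![0, 0, 0, I; 0, 0, -I, 0; 0, I, 0, 0; -I, 0, 0, 0]

lemma hg1 : g1 * g1 = 1 := by
  ext i j
  fin_cases i <;> fin_cases j <;>
    simp [g1, Matrix.mul_apply, Fin.sum_univ_four, Matrix.one_apply,
      Matrix.vecHead, Matrix.vecTail]

lemma hg2 : g2 * g2 = 1 := by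
  ext i j
  fin_cases i <;> fin_cases j <;>
    simp [g2, Matrix.mul_apply, Fin.sum_univ_four, Matrix.one_apply,
      Matrix.vecHead, Matrix.vecTail, Complex.I_mul_I]

lemma hg3 : g3 * g3 = 1 := by
  ext i j
  fin_cases i <;> fin_cases j <;>
    simp [g3, Matrix.mul_apply, Fin.sum_univ_four, Matrix.one_apply,
      Matrix.vecHead, Matrix.vecTail]

lemma hg4 : g4 * g4 = 1 := by
  ext i j
  fin_cases i <;> fin_cases j <;>
    simp [g4, Matrix.mul_apply, Fin.sum_univ_four, Matrix.one_apply,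
      Matrix.vecHead, Matrix.vecTail]

lemma hg5 : g5 * g5 = 1 := by
  ext i j
  fin_cases i <;> fin_cases j <;>
    simp [g5, Matrix.mul_apply, Fin.sum_univ_four, Matrix.one_apply,
      Matrix.vecHead, Matrix.vecTail, Complex.I_mul_I]

/-- The generators as elements of `GL₄(ℂ)` (each is an involution). -/
noncomputable def u1 : GL (Fin 4) ℂ := ⟨g1, g1, hg1, hg1⟩
noncomputable def u2 : GL (Fin 4) ℂ := ⟨g2, g2, hg2, hg2⟩
noncomputable def u3 : GL (Fin 4) ℂ := ⟨g3, g3, hg3, hg3⟩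
noncomputable def u4 : GL (Fin 4) ℂ := ⟨g4, g4, hg4, hg4⟩
noncomputable def u5 : GL (Fin 4) ℂ := ⟨g5, g5, hg5, hg5⟩

/-- The group `G ⊆ GL₄(ℂ)` generated by the five matrices. -/
noncomputable def G : Subgroup (GL (Fin 4) ℂ) :=
  Subgroup.closure {u1, u2, u3, u4, u5}


section Aux

abbrev GL4 := GL (Fin 4) ℂ

-- matrix-level anticommutation lemmas for all distinct generator pairs
lemma a12 : g1 * g2 = -(g2 * g1) := by
  ext i j
  fin_cases i <;> fin_cases j <;>
    simp [g1, g2, Matrix.mul_apply, Fin.sum_univ_four, Complex.I_mul_I,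
      Matrix.vecHead, Matrix.vecTail]
lemma a13 : g1 * g3 = -(g3 * g1) := by
  ext i j
  fin_cases i <;> fin_cases j <;>
    simp [g1, g3, Matrix.mul_apply, Fin.sum_univ_four, Complex.I_mul_I,
      Matrix.vecHead, Matrix.vecTail]
lemma a14 : g1 * g4 = -(g4 * g1) := by
  ext i j
  fin_cases i <;> fin_cases j <;>
    simp [g1, g4, Matrix.mul_apply, Fin.sum_univ_four, Complex.I_mul_I,
      Matrix.vecHead, Matrix.vecTail]
lemma a15 : g1 * g5 = -(g5 * g1) := by
  ext i j
  fin_cases i <;> fin_cases j <;>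
    simp [g1, g5, Matrix.mul_apply, Fin.sum_univ_four, Complex.I_mul_I,
      Matrix.vecHead, Matrix.vecTail]
lemma a23 : g2 * g3 = -(g3 * g2) := by
  ext i j
  fin_cases i <;> fin_cases j <;>
    simp [g2, g3, Matrix.mul_apply, Fin.sum_univ_four, Complex.I_mul_I,
      Matrix.vecHead, Matrix.vecTail]
lemma a24 : g2 * g4 = -(g4 * g2) := by
  ext i j
  fin_cases i <;> fin_cases j <;>
    simp [g2, g4, Matrix.mul_apply, Fin.sum_univ_four, Complex.I_mul_I,
      Matrix.vecHead, Matrix.vecTail]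
lemma a25 : g2 * g5 = -(g5 * g2) := by
  ext i j
  fin_cases i <;> fin_cases j <;>
    simp [g2, g5, Matrix.mul_apply, Fin.sum_univ_four, Complex.I_mul_I,
      Matrix.vecHead, Matrix.vecTail]
lemma a34 : g3 * g4 = -(g4 * g3) := by
  ext i j
  fin_cases i <;> fin_cases j <;>
    simp [g3, g4, Matrix.mul_apply, Fin.sum_univ_four, Complex.I_mul_I,
      Matrix.vecHead, Matrix.vecTail]
lemma a35 : g3 * g5 = -(g5 * g3) := by
  ext i j
  fin_cases i <;> fin_cases j <;>
    simp [g3, g5, Matrix.mul_apply, Fin.sum_univ_four, Complex.I_mul_I,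
      Matrix.vecHead, Matrix.vecTail]
lemma a45 : g4 * g5 = -(g5 * g4) := by
  ext i j
  fin_cases i <;> fin_cases j <;>
    simp [g4, g5, Matrix.mul_apply, Fin.sum_univ_four, Complex.I_mul_I,
      Matrix.vecHead, Matrix.vecTail]

/-- "commute up to sign" -/
def Pm (x y : GL4) : Prop := x * y = y * x ∨ x * y = -(y * x)

lemma Pm.symm {x y : GL4} (h : Pm x y) : Pm y x := by
  rcases h with h | h
  · exact Or.inl h.symm
  · exact Or.inr (by rw [h, neg_neg])

lemma pm_of_mat {a b : GL4}
    (h : (a : Matrix (Fin 4) (Fin 4) ℂ) * b = -((b : Matrix (Fin 4) (Fin 4) ℂ) * a)) :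
    Pm a b :=
  Or.inr (Units.ext (by simpa using h))

lemma p12 : Pm u1 u2 := pm_of_mat a12
lemma p13 : Pm u1 u3 := pm_of_mat a13
lemma p14 : Pm u1 u4 := pm_of_mat a14
lemma p15 : Pm u1 u5 := pm_of_mat a15
lemma p23 : Pm u2 u3 := pm_of_mat a23
lemma p24 : Pm u2 u4 := pm_of_mat a24
lemma p25 : Pm u2 u5 := pm_of_mat a25
lemma p34 : Pm u3 u4 := pm_of_mat a34
lemma p35 : Pm u3 u5 := pm_of_mat a35
lemma p45 : Pm u4 u5 := pm_of_mat a45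

lemma pm_self (a : GL4) : Pm a a := Or.inl rfl

lemma Pm.mul_left {x y z : GL4} (h1 : Pm x z) (h2 : Pm y z) : Pm (x * y) z := by
  rcases h1 with h1 | h1 <;> rcases h2 with h2 | h2
  · exact Or.inl (by rw [mul_assoc, h2, ← mul_assoc, h1, mul_assoc])
  · exact Or.inr (by rw [mul_assoc, h2, mul_neg, ← mul_assoc, h1, mul_assoc])
  · exact Or.inr (by rw [mul_assoc, h2, ← mul_assoc, h1, neg_mul, mul_assoc])
  · exact Or.inl (by
      rw [mul_assoc, h2, mul_neg, ← mul_assoc, h1, neg_mul, neg_neg, mul_assoc])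

lemma Pm.inv_left {x z : GL4} (h : Pm x z) : Pm x⁻¹ z := by
  rcases h with h | h
  · exact Or.inl ((Commute.inv_left h).eq)
  · refine Or.inr ?_
    have h' : z * x = -(x * z) := by rw [h, neg_neg]
    have h2 : x⁻¹ * (z * x) * x⁻¹ = x⁻¹ * -(x * z) * x⁻¹ := by rw [h']
    simpa [mul_assoc, mul_neg, neg_mul] using h2

lemma key : ∀ x ∈ G, ∀ y ∈ G, Pm x y := by
  have base : ∀ a ∈ ({u1, u2, u3, u4, u5} : Set GL4),
      ∀ b ∈ ({u1, u2, u3, u4, u5} : Set GL4), Pm a b := by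
    intro a ha b hb
    simp only [Set.mem_insert_iff, Set.mem_singleton_iff] at ha hb
    rcases ha with rfl | rfl | rfl | rfl | rfl
    · rcases hb with rfl | rfl | rfl | rfl | rfl
      exacts [pm_self _, p12, p13, p14, p15]
    · rcases hb with rfl | rfl | rfl | rfl | rfl
      exacts [p12.symm, pm_self _, p23, p24, p25]
    · rcases hb with rfl | rfl | rfl | rfl | rfl
      exacts [p13.symm, p23.symm, pm_self _, p34, p35]
    · rcases hb with rfl | rfl | rfl | rfl | rfl
      exacts [p14.symm, p24.symm, p34.symm, pm_self _, p45]
    · rcases hb with rfl | rfl | rfl | rfl | rfl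
      exacts [p15.symm, p25.symm, p35.symm, p45.symm, pm_self _]
  intro x hx
  refine Subgroup.closure_induction (p := fun x _ => ∀ y ∈ G, Pm x y)
    ?_ ?_ ?_ ?_ hx
  · intro a ha
    intro y hy
    refine Subgroup.closure_induction (p := fun y _ => Pm a y) ?_ ?_ ?_ ?_ hy
    · intro b hb; exact base a ha b hb
    · exact Or.inl (by simp)
    · intro b c _ _ h1 h2
      exact ((h1.symm.mul_left h2.symm : Pm (b * c) a)).symm
    · intro b _ h1
      exact (h1.symm.inv_left).symm
  · intro y _; exact Or.inl (by simp)
  · intro a b _ _ h1 h2 y hy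
    exact (h1 y hy).mul_left (h2 y hy)
  · intro a _ h1 y hy
    exact (h1 y hy).inv_left

lemma commutator_eq_neg_one {x y : GL4} (h : x * y = -(y * x)) :
    @Bracket.bracket GL4 GL4 commutatorElement x y = -1 := by
  rw [commutatorElement_def, h]
  simp [neg_mul, mul_assoc]

lemma hne : (1 : GL4) ≠ -1 := by
  intro h
  have h0 := congrArg (fun u : GL4 => (u : Matrix (Fin 4) (Fin 4) ℂ) 0 0) h
  simp [Matrix.one_apply] at h0
  exact one_ne_zero (by linear_combination h0 / 2 : (1 : ℂ) = 0)

lemma comm_set : ((⁅G, G⁆ : Subgroup GL4) : Set GL4) = {1, -1} := by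
  have hle : ⁅G, G⁆ ≤ Subgroup.zpowers (-1 : GL4) := by
    rw [Subgroup.commutator_le]
    intro x hx y hy
    rcases key x hx y hy with h | h
    · rw [commutatorElement_eq_one_iff_commute.mpr h]
      exact one_mem _
    · rw [commutator_eq_neg_one h]
      exact Subgroup.mem_zpowers _
  have hmem : (-1 : GL4) ∈ ⁅G, G⁆ := by
    have h1 : u1 ∈ G := Subgroup.subset_closure (by simp)
    have h2 : u2 ∈ G := Subgroup.subset_closure (by simp)
    have hanti : u1 * u2 = -(u2 * u1) := Units.ext (by simp; exact a12)
    have := Subgroup.commutator_mem_commutator h1 h2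
    rwa [commutator_eq_neg_one hanti] at this
  ext x
  simp only [SetLike.mem_coe, Set.mem_insert_iff, Set.mem_singleton_iff]
  constructor
  · intro hx
    obtain ⟨n, rfl⟩ := hle hx
    rcases Int.even_or_odd n with ⟨k, rfl⟩ | ⟨k, rfl⟩
    · left
      show (-1 : GL4) ^ (k + k) = 1
      rw [_root_.zpow_add, ← (Commute.refl (-1 : GL4)).mul_zpow, neg_mul_neg, one_mul,
        _root_.one_zpow]
    · right
      have h2 : (-1 : GL4) ^ (2 : ℤ) = 1 := by
        rw [zpow_two, neg_mul_neg, one_mul]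
      show (-1 : GL4) ^ (2 * k + 1) = -1
      rw [_root_.zpow_add, _root_.zpow_mul, h2, _root_.one_zpow, one_mul, zpow_one]
  · rintro (rfl | rfl)
    · exact one_mem _
    · exact hmem
end Aux

theorem stmt_0 :
    ((⁅G, G⁆ : Subgroup (GL (Fin 4) ℂ)) : Set (GL (Fin 4) ℂ)) = {1, -1} ∧
      Nat.card (↥(⁅G, G⁆ : Subgroup (GL (Fin 4) ℂ))) = 2 := by
  constructor
  · exact comm_set
  · have h2 : Nat.card ↥((⁅G, G⁆ : Subgroup GL4) : Set GL4) = 2 := by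
      rw [Nat.card_coe_set_eq, comm_set, Set.ncard_pair hne]
    exact h2
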